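/- Among all complete bipartite graphs on n vertices, the Sombor energy satisfies 2√((n−1)(n²−2n+2)) ≤ E(K_{s,t}) ≤ 2√(⌈n/2⌉³⌊n/2⌋ + ⌊n/2⌋³⌈n/2⌉), with equality on the left if and only if {s,t} = {1, n−1} and equality on the right if and only if {s,t} = {⌈n/2⌉, ⌊n/2⌋}. -/

import Mathlib

open scoped Classical

noncomputable def somborMatrix {V : Type*} [Fintype V] (G : SimpleGraph V) :
    Matrix V V ℝ := fun i j =>
  if G.Adj i j then Real.sqrt ((G.degree i : ℝ) ^ 2 + (G.degree j : ℝ) ^ 2) else 0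

lemma somborMatrix_isHermitian {V : Type*} [Fintype V] (G : SimpleGraph V) :
    (somborMatrix G).IsHermitian := by
  apply Matrix.ext
  intro i j
  simp only [Matrix.conjTranspose_apply, star_trivial, somborMatrix]
  rw [G.adj_comm, add_comm]

/-- The Sombor eigenvalues of `G`. -/
noncomputable def somborEigs {V : Type*} [Fintype V] (G : SimpleGraph V) : V → ℝ :=
  (somborMatrix_isHermitian G).eigenvalues

/-- The Sombor spectral radius (largest Sombor eigenvalue). -/
noncomputable def somborSpecRad {V : Type*} [Fintype V] (G : SimpleGraph V) : ℝ :=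
  ⨆ i, somborEigs G i

/-- The Sombor energy. -/
noncomputable def somborEnergy {V : Type*} [Fintype V] (G : SimpleGraph V) : ℝ :=
  ∑ i, |somborEigs G i|

/-- The Sombor Estrada index. -/
noncomputable def somborEstrada {V : Type*} [Fintype V] (G : SimpleGraph V) : ℝ :=
  ∑ i, Real.exp (somborEigs G i)

/-- The forgotten topological index `F = ∑ d_i ^ 3`. -/
noncomputable def forgottenIndex {V : Type*} [Fintype V] (G : SimpleGraph V) : ℝ :=
  ∑ i, (G.degree i : ℝ) ^ 3

open Matrix

section KST
variable (s t : ℕ)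

lemma deg_inl (i : Fin s) :
    (completeBipartiteGraph (Fin s) (Fin t)).degree (Sum.inl i) = t := by
  rw [SimpleGraph.degree]
  rw [show (completeBipartiteGraph (Fin s) (Fin t)).neighborFinset (Sum.inl i)
      = Finset.univ.map ⟨Sum.inr, Sum.inr_injective⟩ from ?_]
  · simp
  · ext x; cases x <;> simp

lemma deg_inr (j : Fin t) :
    (completeBipartiteGraph (Fin s) (Fin t)).degree (Sum.inr j) = s := by
  rw [SimpleGraph.degree]
  rw [show (completeBipartiteGraph (Fin s) (Fin t)).neighborFinset (Sum.inr j)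
      = Finset.univ.map ⟨Sum.inl, Sum.inl_injective⟩ from ?_]
  · simp
  · ext x; cases x <;> simp

noncomputable def cst : ℝ := Real.sqrt ((s:ℝ)^2 + (t:ℝ)^2)

lemma S_ll (i j : Fin s) :
    somborMatrix (completeBipartiteGraph (Fin s) (Fin t)) (Sum.inl i) (Sum.inl j) = 0 := by
  simp [somborMatrix]

lemma S_rr (i j : Fin t) :
    somborMatrix (completeBipartiteGraph (Fin s) (Fin t)) (Sum.inr i) (Sum.inr j) = 0 := by
  simp [somborMatrix]

lemma S_lr (i : Fin s) (j : Fin t) :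
    somborMatrix (completeBipartiteGraph (Fin s) (Fin t)) (Sum.inl i) (Sum.inr j) = cst s t := by
  simp [somborMatrix, deg_inl, deg_inr, cst, add_comm]

lemma S_rl (i : Fin t) (j : Fin s) :
    somborMatrix (completeBipartiteGraph (Fin s) (Fin t)) (Sum.inr i) (Sum.inl j) = cst s t := by
  simp [somborMatrix, deg_inl, deg_inr, cst]

end KST
section KST2
variable (s t : ℕ)
local notation "S" => somborMatrix (completeBipartiteGraph (Fin s) (Fin t))
local notation "c" => cst s t

lemma S2_ll (i j : Fin s) : (S * S) (Sum.inl i) (Sum.inl j) = t * c ^ 2 := by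
  simp [Matrix.mul_apply, Fintype.sum_sum_type, S_ll, S_lr, S_rl, S_rr, sq]

lemma S2_rr (i j : Fin t) : (S * S) (Sum.inr i) (Sum.inr j) = s * c ^ 2 := by
  simp [Matrix.mul_apply, Fintype.sum_sum_type, S_ll, S_lr, S_rl, S_rr, sq]

lemma S2_lr (i : Fin s) (j : Fin t) : (S * S) (Sum.inl i) (Sum.inr j) = 0 := by
  simp [Matrix.mul_apply, Fintype.sum_sum_type, S_ll, S_lr, S_rl, S_rr]

lemma S2_rl (i : Fin t) (j : Fin s) : (S * S) (Sum.inr i) (Sum.inl j) = 0 := by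
  simp [Matrix.mul_apply, Fintype.sum_sum_type, S_ll, S_lr, S_rl, S_rr]

lemma traceS2 : (S * S).trace = 2 * s * t * c ^ 2 := by
  simp [Matrix.trace, Matrix.diag, Fintype.sum_sum_type, S2_ll, S2_rr]
  ring

lemma S3 : S * S * S = ((s : ℝ) * t * c ^ 2) • S := by
  apply Matrix.ext
  intro x y
  cases x <;> cases y <;>
    simp [Matrix.mul_apply, Fintype.sum_sum_type, S2_ll, S2_lr, S2_rl, S2_rr,
      S_ll, S_lr, S_rl, S_rr, Finset.mul_sum] <;> ring

end KST2


lemma trace_sq_eq {n : Type*} [Fintype n] [DecidableEq n] {A : Matrix n n ℝ}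
    (hA : A.IsHermitian) : (A * A).trace = ∑ i, hA.eigenvalues i ^ 2 := by
  set U : Matrix n n ℝ := (hA.eigenvectorUnitary : Matrix n n ℝ)
  set D : Matrix n n ℝ := Matrix.diagonal (RCLike.ofReal ∘ hA.eigenvalues)
  have hU : star U * U = 1 := Matrix.mem_unitaryGroup_iff'.mp hA.eigenvectorUnitary.2
  have h : A = U * D * star U := hA.spectral_theorem
  have h2 : A * A = U * (D * D) * star U := by
    rw [h]; rw [show U * D * star U * (U * D * star U) = U * (D * (star U * U) * D) * star U by
      noncomm_ring]
    rw [hU]; noncomm_ring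
  rw [h2, Matrix.trace_mul_cycle, ← Matrix.mul_assoc, hU, Matrix.one_mul]
  simp [D, Matrix.diagonal_mul_diagonal, Matrix.trace_diagonal, sq]

lemma eig_cubic {n : Type*} [Fintype n] [DecidableEq n] {A : Matrix n n ℝ}
    (hA : A.IsHermitian) {K : ℝ} (h3 : A * A * A = K • A) (i : n) :
    hA.eigenvalues i ^ 3 = K * hA.eigenvalues i := by
  set v : n → ℝ := ⇑(hA.eigenvectorBasis i) with hv
  have hv0 : v ≠ 0 := by
    intro h
    exact hA.eigenvectorBasis.orthonormal.ne_zero i (by ext j; exact congrFun h j)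
  have he := hA.mulVec_eigenvectorBasis i
  rw [← hv] at he
  set lam := hA.eigenvalues i
  have h1 : (A * A * A) *ᵥ v = (lam ^ 3) • v := by
    rw [← Matrix.mulVec_mulVec, ← Matrix.mulVec_mulVec]
    simp only [he, Matrix.mulVec_smul, smul_smul]
    congr 1
    ring
  have h2 : (A * A * A) *ᵥ v = (K * lam) • v := by
    rw [h3, Matrix.smul_mulVec, he, smul_smul]
  have := h1.symm.trans h2
  have hz : (lam ^ 3 - K * lam) • v = 0 := by
    rw [sub_smul, this, sub_self]
  rcases smul_eq_zero.mp hz with h | h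
  · linarith [sub_eq_zero.mp (by linarith [h] : lam ^ 3 - K * lam = 0)]
  · exact absurd h hv0


lemma energy_count {n : Type*} [Fintype n] (lam : n → ℝ) (K : ℝ) (hK : 0 < K)
    (h1 : ∀ i, lam i ^ 3 = K * lam i) (h2 : ∑ i, lam i ^ 2 = 2 * K) :
    ∑ i, |lam i| = 2 * Real.sqrt K := by
  classical
  set A : Finset n := Finset.univ.filter (fun i => lam i ≠ 0) with hA
  have hsq : ∀ i ∈ A, lam i ^ 2 = K := by
    intro i hi
    have hne : lam i ≠ 0 := (Finset.mem_filter.mp hi).2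
    have := h1 i
    have hfac : lam i * (lam i ^ 2 - K) = 0 := by ring_nf; nlinarith [h1 i]
    rcases mul_eq_zero.mp hfac with h | h
    · exact absurd h hne
    · linarith
  have hsum2 : ∑ i ∈ A, lam i ^ 2 = ∑ i, lam i ^ 2 := by
    apply Finset.sum_subset (Finset.subset_univ _)
    intro x _ hx
    have : lam x = 0 := by
      by_contra h
      exact hx (Finset.mem_filter.mpr ⟨Finset.mem_univ x, h⟩)
    simp [this]
  have hcardK : (A.card : ℝ) * K = 2 * K := by
    have : ∑ i ∈ A, lam i ^ 2 = A.card * K := by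
      rw [Finset.sum_congr rfl hsq]
      simp [mul_comm]
    rw [← this, hsum2, h2]
  have hcard : (A.card : ℝ) = 2 := by
    exact (mul_left_inj' (ne_of_gt hK)).mp hcardK
  have habs : ∀ i ∈ A, |lam i| = Real.sqrt K := by
    intro i hi
    rw [← hsq i hi, Real.sqrt_sq_eq_abs]
  have hsumabs : ∑ i, |lam i| = ∑ i ∈ A, |lam i| := by
    symm
    apply Finset.sum_subset (Finset.subset_univ _)
    intro x _ hx
    have : lam x = 0 := by
      by_contra h
      exact hx (Finset.mem_filter.mpr ⟨Finset.mem_univ x, h⟩)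
    simp [this]
  rw [hsumabs, Finset.sum_congr rfl habs]
  simp [hcard]

lemma sombor_energy_Kst (s t : ℕ) (hs : 1 ≤ s) (ht : 1 ≤ t) :
    somborEnergy (completeBipartiteGraph (Fin s) (Fin t))
      = 2 * Real.sqrt ((s : ℝ) * t * ((s : ℝ) ^ 2 + (t : ℝ) ^ 2)) := by
  have hsR : (0:ℝ) < s := by exact_mod_cast hs
  have htR : (0:ℝ) < t := by exact_mod_cast ht
  have hc2 : (cst s t) ^ 2 = (s : ℝ) ^ 2 + (t : ℝ) ^ 2 := Real.sq_sqrt (by positivity)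
  set K : ℝ := (s : ℝ) * t * ((s : ℝ) ^ 2 + (t : ℝ) ^ 2) with hKdef
  have hK : 0 < K := by positivity
  have h3 : somborMatrix (completeBipartiteGraph (Fin s) (Fin t)) *
      somborMatrix (completeBipartiteGraph (Fin s) (Fin t)) *
      somborMatrix (completeBipartiteGraph (Fin s) (Fin t))
      = K • somborMatrix (completeBipartiteGraph (Fin s) (Fin t)) := by
    rw [S3, hc2]
  have hA := somborMatrix_isHermitian (completeBipartiteGraph (Fin s) (Fin t))
  have h2 : ∑ i, somborEigs (completeBipartiteGraph (Fin s) (Fin t)) i ^ 2 = 2 * K := by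
    have htr : (somborMatrix (completeBipartiteGraph (Fin s) (Fin t)) *
        somborMatrix (completeBipartiteGraph (Fin s) (Fin t))).trace
        = ∑ i, somborEigs (completeBipartiteGraph (Fin s) (Fin t)) i ^ 2 :=
      trace_sq_eq hA
    rw [← htr, traceS2, hc2, hKdef]
    ring
  rw [somborEnergy]
  have hcub : ∀ i, somborEigs (completeBipartiteGraph (Fin s) (Fin t)) i ^ 3
      = K * somborEigs (completeBipartiteGraph (Fin s) (Fin t)) i :=
    fun i => eig_cubic hA h3 i
  exact energy_count _ K hK hcub h2

lemma gchain {N Q P1 P2 : ℝ} (h4 : 4 * Q ≤ N ^ 2) (h12 : P1 ≤ P2) (h2Q : P2 ≤ Q) :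
    P1 * (N ^ 2 - 2 * P1) ≤ P2 * (N ^ 2 - 2 * P2) := by
  nlinarith [mul_nonneg (sub_nonneg.2 h12) (show (0:ℝ) ≤ N ^ 2 - 2 * P1 - 2 * P2 by linarith)]

lemma gchain_eq {N Q P1 P2 : ℝ} (h4 : 4 * Q ≤ N ^ 2) (h12 : P1 ≤ P2) (h2Q : P2 ≤ Q)
    (heq : P1 * (N ^ 2 - 2 * P1) = P2 * (N ^ 2 - 2 * P2)) : P1 = P2 := by
  by_contra h
  have hlt : P1 < P2 := lt_of_le_of_ne h12 h
  nlinarith [mul_pos (sub_pos.2 hlt) (show (0:ℝ) < N ^ 2 - 2 * P1 - 2 * P2 by linarith)]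

theorem stmt13 (n s t : ℕ) (hs : 1 ≤ s) (ht : 1 ≤ t) (hn : s + t = n) :
    (2 * Real.sqrt (((n : ℝ) - 1) * ((n : ℝ) ^ 2 - 2 * n + 2)) ≤
        somborEnergy (completeBipartiteGraph (Fin s) (Fin t)) ∧
      somborEnergy (completeBipartiteGraph (Fin s) (Fin t)) ≤
        2 * Real.sqrt ((((n + 1) / 2 : ℕ) : ℝ) ^ 3 * ((n / 2 : ℕ) : ℝ) +
          (((n / 2 : ℕ) : ℝ)) ^ 3 * (((n + 1) / 2 : ℕ) : ℝ)) ∧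
    (2 * Real.sqrt (((n : ℝ) - 1) * ((n : ℝ) ^ 2 - 2 * n + 2)) =
        somborEnergy (completeBipartiteGraph (Fin s) (Fin t)) ↔
      (s = 1 ∧ t = n - 1) ∨ (s = n - 1 ∧ t = 1)) ∧
    (somborEnergy (completeBipartiteGraph (Fin s) (Fin t)) =
        2 * Real.sqrt ((((n + 1) / 2 : ℕ) : ℝ) ^ 3 * ((n / 2 : ℕ) : ℝ) +
          (((n / 2 : ℕ) : ℝ)) ^ 3 * (((n + 1) / 2 : ℕ) : ℝ)) ↔
      (s = (n + 1) / 2 ∧ t = n / 2) ∨ (s = n / 2 ∧ t = (n + 1) / 2))) := by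
  have hn2 : 2 ≤ n := by omega
  have hs1 : (1:ℝ) ≤ (s:ℝ) := by exact_mod_cast hs
  have ht1 : (1:ℝ) ≤ (t:ℝ) := by exact_mod_cast ht
  have hnR : (s:ℝ) + (t:ℝ) = (n:ℝ) := by exact_mod_cast hn
  have hnR2 : (2:ℝ) ≤ (n:ℝ) := by exact_mod_cast hn2
  have habn : n / 2 + (n + 1) / 2 = n := by omega
  have habR : ((n/2 : ℕ):ℝ) + (((n+1)/2 : ℕ):ℝ) = (n:ℝ) := by exact_mod_cast habn
  have haleb : (n / 2) ≤ (n + 1) / 2 := by omega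
  -- g-value abbreviations
  have h4 : 4 * (((n/2 : ℕ):ℝ) * (((n+1)/2 : ℕ):ℝ)) ≤ (n:ℝ) ^ 2 := by
    nlinarith [sq_nonneg (((n/2 : ℕ):ℝ) - (((n+1)/2 : ℕ):ℝ))]
  have hP0P : (n:ℝ) - 1 ≤ (s:ℝ) * (t:ℝ) := by
    nlinarith [mul_nonneg (sub_nonneg.2 hs1) (sub_nonneg.2 ht1)]
  have hfac : 0 ≤ (((n/2 : ℕ):ℝ) - (s:ℝ)) * ((((n+1)/2 : ℕ):ℝ) - (s:ℝ)) := by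
    rcases le_or_gt s (n / 2) with h | h
    · have h1 : (s:ℝ) ≤ ((n/2 : ℕ):ℝ) := by exact_mod_cast h
      have h2 : (s:ℝ) ≤ (((n+1)/2 : ℕ):ℝ) := by exact_mod_cast le_trans h haleb
      nlinarith
    · have h1 : ((n/2 : ℕ):ℝ) ≤ (s:ℝ) := by exact_mod_cast (by omega : n / 2 ≤ s)
      have h2 : (((n+1)/2 : ℕ):ℝ) ≤ (s:ℝ) := by exact_mod_cast (by omega : (n+1)/2 ≤ s)
      nlinarith
  have hident : ((n/2 : ℕ):ℝ) * (((n+1)/2 : ℕ):ℝ) - (s:ℝ) * (t:ℝ)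
      = (((n/2 : ℕ):ℝ) - (s:ℝ)) * ((((n+1)/2 : ℕ):ℝ) - (s:ℝ)) := by
    have htReq : (t:ℝ) = ((n/2 : ℕ):ℝ) + (((n+1)/2 : ℕ):ℝ) - (s:ℝ) := by linarith
    rw [htReq]; ring
  have hPQ : (s:ℝ) * (t:ℝ) ≤ ((n/2 : ℕ):ℝ) * (((n+1)/2 : ℕ):ℝ) := by linarith
  have hg0nn : 0 ≤ ((n:ℝ) - 1) * ((n:ℝ) ^ 2 - 2 * ((n:ℝ) - 1)) := by
    nlinarith [sq_nonneg ((n:ℝ) - 1)]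
  have hgl : ((n:ℝ) - 1) * ((n:ℝ) ^ 2 - 2 * ((n:ℝ) - 1))
      ≤ ((s:ℝ) * (t:ℝ)) * ((n:ℝ) ^ 2 - 2 * ((s:ℝ) * (t:ℝ))) := gchain h4 hP0P hPQ
  have hgr : ((s:ℝ) * (t:ℝ)) * ((n:ℝ) ^ 2 - 2 * ((s:ℝ) * (t:ℝ)))
      ≤ (((n/2 : ℕ):ℝ) * (((n+1)/2 : ℕ):ℝ)) *
        ((n:ℝ) ^ 2 - 2 * (((n/2 : ℕ):ℝ) * (((n+1)/2 : ℕ):ℝ))) := gchain h4 hPQ le_rfl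
  have hgPnn : 0 ≤ ((s:ℝ) * (t:ℝ)) * ((n:ℝ) ^ 2 - 2 * ((s:ℝ) * (t:ℝ))) := le_trans hg0nn hgl
  have hgQnn : 0 ≤ (((n/2 : ℕ):ℝ) * (((n+1)/2 : ℕ):ℝ)) *
      ((n:ℝ) ^ 2 - 2 * (((n/2 : ℕ):ℝ) * (((n+1)/2 : ℕ):ℝ))) := le_trans hgPnn hgr
  -- rewrite sqrt arguments
  have hLarg : ((n : ℝ) - 1) * ((n : ℝ) ^ 2 - 2 * n + 2)
      = ((n:ℝ) - 1) * ((n:ℝ) ^ 2 - 2 * ((n:ℝ) - 1)) := by ring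
  have hRarg : (((n + 1) / 2 : ℕ) : ℝ) ^ 3 * ((n / 2 : ℕ) : ℝ) +
        (((n / 2 : ℕ) : ℝ)) ^ 3 * (((n + 1) / 2 : ℕ) : ℝ)
      = (((n/2 : ℕ):ℝ) * (((n+1)/2 : ℕ):ℝ)) *
        ((n:ℝ) ^ 2 - 2 * (((n/2 : ℕ):ℝ) * (((n+1)/2 : ℕ):ℝ))) := by
    rw [← habR]; ring
  have hst2 : (s:ℝ) ^ 2 + (t:ℝ) ^ 2 = (n:ℝ) ^ 2 - 2 * ((s:ℝ) * (t:ℝ)) := by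
    linear_combination ((s:ℝ) + (t:ℝ) + (n:ℝ)) * hnR
  have hE' : somborEnergy (completeBipartiteGraph (Fin s) (Fin t))
      = 2 * Real.sqrt (((s:ℝ) * (t:ℝ)) * ((n:ℝ) ^ 2 - 2 * ((s:ℝ) * (t:ℝ)))) := by
    rw [sombor_energy_Kst s t hs ht, hst2]
  have key : ∀ x y : ℝ, 0 ≤ x → 0 ≤ y →
      (2 * Real.sqrt x = 2 * Real.sqrt y ↔ x = y) := by
    intro x y hx hy
    constructor
    · intro h
      exact (Real.sqrt_inj hx hy).mp (by linarith)
    · intro h; rw [h]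
  rw [hE', hLarg, hRarg]
  refine ⟨mul_le_mul_of_nonneg_left (Real.sqrt_le_sqrt hgl) (by norm_num),
    mul_le_mul_of_nonneg_left (Real.sqrt_le_sqrt hgr) (by norm_num), ?_, ?_⟩
  · rw [key _ _ hg0nn hgPnn]
    constructor
    · intro h
      have hP0eqP := gchain_eq h4 hP0P hPQ h
      have hz : ((s:ℝ) - 1) * ((t:ℝ) - 1) = 0 := by linear_combination -hP0eqP - hnR
      rcases mul_eq_zero.mp hz with h' | h'
      · have : s = 1 := by exact_mod_cast sub_eq_zero.mp h'
        omega
      · have : t = 1 := by exact_mod_cast sub_eq_zero.mp h'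
        omega
    · intro h
      have hc : ((n - 1 : ℕ):ℝ) = (n:ℝ) - 1 := by
        rw [Nat.cast_sub (by omega)]; norm_num
      have Peq : (s:ℝ) * (t:ℝ) = (n:ℝ) - 1 := by
        rcases h with ⟨h1, h2⟩ | ⟨h1, h2⟩ <;> subst h1 <;> subst h2 <;> simp [hc]
      rw [Peq]
  · rw [key _ _ hgPnn hgQnn]
    constructor
    · intro h
      have hPeqQ := gchain_eq h4 hPQ le_rfl h
      have hz : (((n/2 : ℕ):ℝ) - (s:ℝ)) * ((((n+1)/2 : ℕ):ℝ) - (s:ℝ)) = 0 := by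
        rw [← hident]; linarith
      rcases mul_eq_zero.mp hz with h' | h'
      · have : s = n / 2 := by
          have := sub_eq_zero.mp h'
          exact_mod_cast this.symm
        omega
      · have : s = (n + 1) / 2 := by
          have := sub_eq_zero.mp h'
          exact_mod_cast this.symm
        omega
    · intro h
      rcases h with ⟨h1, h2⟩ | ⟨h1, h2⟩
      · subst h1; subst h2; ring
      · subst h1; subst h2; ring
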